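/- Let (Ω, F) be a measurable space, K ≥ 1 an integer, F_0 ⊆ F_1 ⊆ … ⊆ F_K ⊆ F an increasing family of sub-σ-algebras, and let Q and P be probability measures on (Ω, F) with P ≪ Q, density D = dP/dQ with D > 0 Q-almost everywhere. Set D_j = E_Q[D | F_j] and assume D_0 = 1 Q-almost everywhere (i.e. P = Q on F_0). Assume there is a constant C ≥ 1 and, for every j ∈ {1, …, K}, nonnegative measurable functions S_j, U_j with D_j² ≤ S_j · U_j · D_{j-1}² Q-almost everywhere, E_Q[S_j] ≤ 1 and E_Q[U_j²] ≤ C. Then for every A ∈ F_K: P(A) ≤ C^{K(K+1)/8} · Q(A)^{1/4^K}. -/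

import Mathlib

open MeasureTheory
open scoped ENNReal

private lemma lin_CS {Ω : Type*} {mΩ : MeasurableSpace Ω} (Q : Measure Ω) {f g : Ω → ℝ}
    (hf : Measurable f) (hg : Measurable g)
    (hf0 : ∀ ω, 0 ≤ f ω) (hg0 : ∀ ω, 0 ≤ g ω) :
    ∫⁻ ω, ENNReal.ofReal (f ω * g ω) ∂Q ≤
      (∫⁻ ω, ENNReal.ofReal (f ω ^ 2) ∂Q) ^ ((1:ℝ)/2) *
      (∫⁻ ω, ENNReal.ofReal (g ω ^ 2) ∂Q) ^ ((1:ℝ)/2) := by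
  have h22 : Real.HolderConjugate 2 2 := Real.HolderConjugate.two_two
  have hmain := ENNReal.lintegral_mul_le_Lp_mul_Lq Q h22
    (f := fun ω => ENNReal.ofReal (f ω)) (g := fun ω => ENNReal.ofReal (g ω))
    hf.ennreal_ofReal.aemeasurable hg.ennreal_ofReal.aemeasurable
  have e2 : ∀ (h : Ω → ℝ), (∀ ω, 0 ≤ h ω) →
      ∫⁻ ω, ENNReal.ofReal (h ω) ^ (2:ℝ) ∂Q = ∫⁻ ω, ENNReal.ofReal (h ω ^ 2) ∂Q := by
    intro h h0
    refine lintegral_congr fun ω => ?_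
    rw [ENNReal.ofReal_rpow_of_nonneg (h0 ω) (by norm_num), Real.rpow_two]
  calc ∫⁻ ω, ENNReal.ofReal (f ω * g ω) ∂Q
      = ∫⁻ ω, ((fun ω => ENNReal.ofReal (f ω)) * fun ω => ENNReal.ofReal (g ω)) ω ∂Q := by
        refine lintegral_congr fun ω => ?_
        simp [ENNReal.ofReal_mul (hf0 ω)]
    _ ≤ (∫⁻ ω, ENNReal.ofReal (f ω) ^ (2:ℝ) ∂Q) ^ ((1:ℝ)/2) *
        (∫⁻ ω, ENNReal.ofReal (g ω) ^ (2:ℝ) ∂Q) ^ ((1:ℝ)/2) := by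
        simpa using hmain
    _ = _ := by rw [e2 f hf0, e2 g hg0]

private lemma step_lemma {Ω : Type*} {mΩ : MeasurableSpace Ω} {Q : Measure Ω}
    [IsProbabilityMeasure Q]
    {m m' : MeasurableSpace Ω} (hmm' : m ≤ m') (hm' : m' ≤ mΩ)
    {D : Ω → ℝ} (hDint : Integrable D Q) (hDae : 0 ≤ᵐ[Q] D)
    {s u : Ω → ℝ} (hs : Measurable[mΩ] s) (hu : Measurable[mΩ] u)
    (hs0 : ∀ ω, 0 ≤ s ω) (hu0 : ∀ ω, 0 ≤ u ω)
    (hfac : ∀ᵐ ω ∂Q, (Q[D|m']) ω ^ 2 ≤ s ω * u ω * (Q[D|m]) ω ^ 2)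
    (hsint : ∫⁻ ω, ENNReal.ofReal (s ω) ∂Q ≤ 1)
    {C : ℝ} (hC : 1 ≤ C)
    (huint : ∫⁻ ω, ENNReal.ofReal (u ω ^ 2) ∂Q ≤ ENNReal.ofReal C)
    {N : ℝ≥0∞} {α : ℝ} (hα0 : 0 ≤ α)
    (IH : ∀ φ : Ω → ℝ, Measurable[mΩ] φ → (∀ ω, 0 ≤ φ ω) → (∀ ω, φ ω ≤ 1) →
      ∫⁻ ω, ENNReal.ofReal ((Q[D|m]) ω * φ ω) ∂Q
        ≤ N * (∫⁻ ω, ENNReal.ofReal (φ ω) ∂Q) ^ α)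
    {φ₀ : Ω → ℝ} (hφ₀m : Measurable[mΩ] φ₀) (hφ₀0 : ∀ ω, 0 ≤ φ₀ ω) (hφ₀1 : ∀ ω, φ₀ ω ≤ 1) :
    ∫⁻ ω, ENNReal.ofReal ((Q[D|m']) ω * φ₀ ω) ∂Q
      ≤ N * ((ENNReal.ofReal C) ^ ((1:ℝ)/4) *
          (∫⁻ ω, ENNReal.ofReal (φ₀ ω) ∂Q) ^ ((1:ℝ)/4)) ^ α := by
  have hm : m ≤ mΩ := hmm'.trans hm'
  haveI : SigmaFinite (Q.trim hm) := inferInstance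
  haveI : SigmaFinite (Q.trim hm') := inferInstance
  set V := Q[D|m'] with hVdef
  set W := Q[D|m] with hWdef
  have hWsm : StronglyMeasurable[m] W := stronglyMeasurable_condExp
  have hVsm : StronglyMeasurable[m'] V := stronglyMeasurable_condExp
  have hWmeas : Measurable[mΩ] W := (hWsm.mono hm).measurable
  have hVmeas : Measurable[mΩ] V := (hVsm.mono hm').measurable
  have hVint : Integrable V Q := integrable_condExp
  have hWint : Integrable W Q := integrable_condExp
  have hV0 : 0 ≤ᵐ[Q] V := condExp_nonneg hDae
  have hW0 : 0 ≤ᵐ[Q] W := condExp_nonneg hDae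
  have hVW : ∀ᵐ ω ∂Q, V ω ≤ Real.sqrt (s ω * u ω) * W ω := by
    filter_upwards [hfac, hV0, hW0] with ω h1 h2 h3
    have h4 : V ω = Real.sqrt (V ω ^ 2) := (Real.sqrt_sq h2).symm
    rw [h4]
    calc Real.sqrt (V ω ^ 2) ≤ Real.sqrt (s ω * u ω * W ω ^ 2) := Real.sqrt_le_sqrt h1
      _ = Real.sqrt (s ω * u ω) * Real.sqrt (W ω ^ 2) :=
          Real.sqrt_mul (mul_nonneg (hs0 ω) (hu0 ω)) _
      _ = Real.sqrt (s ω * u ω) * W ω := by rw [Real.sqrt_sq h3]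
  set G : Ω → ℝ := fun ω => Real.sqrt (s ω * u ω) * φ₀ ω with hGdef
  have hsqsu_meas : Measurable[mΩ] fun ω => Real.sqrt (s ω * u ω) :=
    Real.continuous_sqrt.measurable.comp (hs.mul hu)
  have hGmeas : Measurable[mΩ] G := hsqsu_meas.mul hφ₀m
  have hG0 : ∀ ω, 0 ≤ G ω := fun ω => mul_nonneg (Real.sqrt_nonneg _) (hφ₀0 ω)
  have hsqs : Measurable[mΩ] fun ω => Real.sqrt (s ω) :=
    Real.continuous_sqrt.measurable.comp hs
  have hsqu : Measurable[mΩ] fun ω => Real.sqrt (u ω) :=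
    Real.continuous_sqrt.measurable.comp hu
  -- first moment of u
  have huT : ∫⁻ ω, ENNReal.ofReal (u ω) ∂Q ≤ (ENNReal.ofReal C) ^ ((1:ℝ)/2) := by
    have h1 := lin_CS Q hu measurable_const hu0 (fun _ => (zero_le_one : (0:ℝ) ≤ 1))
    simp only [mul_one, one_pow] at h1
    have h2 : ∫⁻ (_ : Ω), ENNReal.ofReal (1:ℝ) ∂Q = 1 := by simp
    rw [h2, ENNReal.one_rpow, mul_one] at h1
    exact h1.trans (ENNReal.rpow_le_rpow huint (by norm_num))
  have hsu_int : Integrable (fun ω => Real.sqrt (s ω * u ω)) Q := by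
    refine ⟨hsqsu_meas.aestronglyMeasurable, ?_⟩
    rw [hasFiniteIntegral_iff_ofReal (ae_of_all _ fun ω => Real.sqrt_nonneg _)]
    have hcalc : ∫⁻ ω, ENNReal.ofReal (Real.sqrt (s ω * u ω)) ∂Q
        ≤ (∫⁻ ω, ENNReal.ofReal (s ω) ∂Q) ^ ((1:ℝ)/2) *
          (∫⁻ ω, ENNReal.ofReal (u ω) ∂Q) ^ ((1:ℝ)/2) := by
      calc ∫⁻ ω, ENNReal.ofReal (Real.sqrt (s ω * u ω)) ∂Q
          = ∫⁻ ω, ENNReal.ofReal (Real.sqrt (s ω) * Real.sqrt (u ω)) ∂Q := by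
            refine lintegral_congr fun ω => ?_
            rw [Real.sqrt_mul (hs0 ω)]
        _ ≤ (∫⁻ ω, ENNReal.ofReal (Real.sqrt (s ω) ^ 2) ∂Q) ^ ((1:ℝ)/2) *
            (∫⁻ ω, ENNReal.ofReal (Real.sqrt (u ω) ^ 2) ∂Q) ^ ((1:ℝ)/2) :=
            lin_CS Q hsqs hsqu (fun ω => Real.sqrt_nonneg _) (fun ω => Real.sqrt_nonneg _)
        _ = (∫⁻ ω, ENNReal.ofReal (s ω) ∂Q) ^ ((1:ℝ)/2) *
            (∫⁻ ω, ENNReal.ofReal (u ω) ∂Q) ^ ((1:ℝ)/2) := by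
            have es : ∫⁻ ω, ENNReal.ofReal (Real.sqrt (s ω) ^ 2) ∂Q
                = ∫⁻ ω, ENNReal.ofReal (s ω) ∂Q :=
              lintegral_congr fun ω => by rw [Real.sq_sqrt (hs0 ω)]
            have eu : ∫⁻ ω, ENNReal.ofReal (Real.sqrt (u ω) ^ 2) ∂Q
                = ∫⁻ ω, ENNReal.ofReal (u ω) ∂Q :=
              lintegral_congr fun ω => by rw [Real.sq_sqrt (hu0 ω)]
            rw [es, eu]
    refine lt_of_le_of_lt hcalc ?_
    refine ENNReal.mul_lt_top ?_ ?_
    · exact ENNReal.rpow_lt_top_of_nonneg (by norm_num) (hsint.trans_lt ENNReal.one_lt_top).ne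
    · exact ENNReal.rpow_lt_top_of_nonneg (by norm_num)
        (huT.trans_lt (ENNReal.rpow_lt_top_of_nonneg (by norm_num) ENNReal.ofReal_ne_top)).ne
  have hG_int : Integrable G Q := by
    refine hsu_int.mono' hGmeas.aestronglyMeasurable (ae_of_all _ fun ω => ?_)
    rw [Real.norm_eq_abs, abs_of_nonneg (hG0 ω)]
    exact mul_le_of_le_one_right (Real.sqrt_nonneg _) (hφ₀1 ω)
  set ξ := Q[G|m] with hξdef
  have hξsm : StronglyMeasurable[m] ξ := stronglyMeasurable_condExp
  have hξmeas : Measurable[mΩ] ξ := (hξsm.mono hm).measurable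
  have hξ0 : 0 ≤ᵐ[Q] ξ := condExp_nonneg (ae_of_all _ hG0)
  set φ : Ω → ℝ := fun ω => min 1 (max (ξ ω) 0) with hφdef
  have hφmeas : Measurable[mΩ] φ := measurable_const.min (hξmeas.max measurable_const)
  have hφ0 : ∀ ω, 0 ≤ φ ω := fun ω => le_min zero_le_one (le_max_right _ _)
  have hφ1 : ∀ ω, φ ω ≤ 1 := fun ω => min_le_left _ _
  -- bound the mass of φ
  have hφT : ∫⁻ ω, ENNReal.ofReal (φ ω) ∂Q ≤
      (ENNReal.ofReal C) ^ ((1:ℝ)/4) * (∫⁻ ω, ENNReal.ofReal (φ₀ ω) ∂Q) ^ ((1:ℝ)/4) := by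
    have s1 : ∫⁻ ω, ENNReal.ofReal (φ ω) ∂Q ≤ ∫⁻ ω, ENNReal.ofReal (ξ ω) ∂Q := by
      refine lintegral_mono fun ω => ?_
      rcases le_total (ξ ω) 0 with h | h
      · have : φ ω = 0 := by rw [hφdef]; simp [max_eq_right h]
        simp [this]
      · calc ENNReal.ofReal (φ ω) ≤ ENNReal.ofReal (max (ξ ω) 0) :=
            ENNReal.ofReal_le_ofReal (min_le_right _ _)
          _ = ENNReal.ofReal (ξ ω) := by rw [max_eq_left h]
    have s2 : ∫⁻ ω, ENNReal.ofReal (ξ ω) ∂Q = ∫⁻ ω, ENNReal.ofReal (G ω) ∂Q := by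
      rw [← ofReal_integral_eq_lintegral_ofReal integrable_condExp hξ0,
        ← ofReal_integral_eq_lintegral_ofReal hG_int (ae_of_all _ hG0)]
      congr 1
      exact integral_condExp hm
    have s3 : ∫⁻ ω, ENNReal.ofReal (G ω) ∂Q ≤
        (ENNReal.ofReal C) ^ ((1:ℝ)/4) * (∫⁻ ω, ENNReal.ofReal (φ₀ ω) ∂Q) ^ ((1:ℝ)/4) := by
      have e : ∀ ω, G ω =
          (Real.sqrt (s ω) * Real.sqrt (φ₀ ω)) * (Real.sqrt (u ω) * Real.sqrt (φ₀ ω)) := by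
        intro ω
        have h5 : Real.sqrt (φ₀ ω) * Real.sqrt (φ₀ ω) = φ₀ ω := Real.mul_self_sqrt (hφ₀0 ω)
        calc G ω = Real.sqrt (s ω) * Real.sqrt (u ω) *
              (Real.sqrt (φ₀ ω) * Real.sqrt (φ₀ ω)) := by
              rw [hGdef]; simp only []; rw [Real.sqrt_mul (hs0 ω), h5]
          _ = _ := by ring
      have hsφ : Measurable[mΩ] fun ω => Real.sqrt (s ω) * Real.sqrt (φ₀ ω) :=
        hsqs.mul (Real.continuous_sqrt.measurable.comp hφ₀m)
      have huφ : Measurable[mΩ] fun ω => Real.sqrt (u ω) * Real.sqrt (φ₀ ω) :=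
        hsqu.mul (Real.continuous_sqrt.measurable.comp hφ₀m)
      have c1 : ∫⁻ ω, ENNReal.ofReal ((Real.sqrt (s ω) * Real.sqrt (φ₀ ω)) ^ 2) ∂Q ≤ 1 := by
        have : ∀ ω, (Real.sqrt (s ω) * Real.sqrt (φ₀ ω)) ^ 2 ≤ s ω := by
          intro ω
          rw [mul_pow, Real.sq_sqrt (hs0 ω), Real.sq_sqrt (hφ₀0 ω)]
          exact mul_le_of_le_one_right (hs0 ω) (hφ₀1 ω)
        exact (lintegral_mono fun ω => ENNReal.ofReal_le_ofReal (this ω)).trans hsint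
      have c2 : ∫⁻ ω, ENNReal.ofReal ((Real.sqrt (u ω) * Real.sqrt (φ₀ ω)) ^ 2) ∂Q ≤
          (ENNReal.ofReal C) ^ ((1:ℝ)/2) *
            (∫⁻ ω, ENNReal.ofReal (φ₀ ω) ∂Q) ^ ((1:ℝ)/2) := by
        have e2 : ∀ ω, (Real.sqrt (u ω) * Real.sqrt (φ₀ ω)) ^ 2 =
            (u ω * Real.sqrt (φ₀ ω)) * Real.sqrt (φ₀ ω) := by
          intro ω
          have h1 : Real.sqrt (u ω) ^ 2 = u ω := Real.sq_sqrt (hu0 ω)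
          rw [mul_pow, h1]
          ring
        have hmeas2 : Measurable[mΩ] fun ω => u ω * Real.sqrt (φ₀ ω) :=
          hu.mul (Real.continuous_sqrt.measurable.comp hφ₀m)
        have c21 : ∫⁻ ω, ENNReal.ofReal ((u ω * Real.sqrt (φ₀ ω)) ^ 2) ∂Q ≤
            ENNReal.ofReal C := by
          have : ∀ ω, (u ω * Real.sqrt (φ₀ ω)) ^ 2 ≤ u ω ^ 2 := by
            intro ω
            rw [mul_pow, Real.sq_sqrt (hφ₀0 ω)]
            exact mul_le_of_le_one_right (sq_nonneg _) (hφ₀1 ω)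
          exact (lintegral_mono fun ω => ENNReal.ofReal_le_ofReal (this ω)).trans huint
        have c22 : ∫⁻ ω, ENNReal.ofReal (Real.sqrt (φ₀ ω) ^ 2) ∂Q =
            ∫⁻ ω, ENNReal.ofReal (φ₀ ω) ∂Q :=
          lintegral_congr fun ω => by rw [Real.sq_sqrt (hφ₀0 ω)]
        calc ∫⁻ ω, ENNReal.ofReal ((Real.sqrt (u ω) * Real.sqrt (φ₀ ω)) ^ 2) ∂Q
            = ∫⁻ ω, ENNReal.ofReal ((u ω * Real.sqrt (φ₀ ω)) * Real.sqrt (φ₀ ω)) ∂Q :=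
              lintegral_congr fun ω => by rw [e2 ω]
          _ ≤ (∫⁻ ω, ENNReal.ofReal ((u ω * Real.sqrt (φ₀ ω)) ^ 2) ∂Q) ^ ((1:ℝ)/2) *
              (∫⁻ ω, ENNReal.ofReal (Real.sqrt (φ₀ ω) ^ 2) ∂Q) ^ ((1:ℝ)/2) :=
              lin_CS Q hmeas2 (Real.continuous_sqrt.measurable.comp hφ₀m)
                (fun ω => mul_nonneg (hu0 ω) (Real.sqrt_nonneg _))
                (fun ω => Real.sqrt_nonneg _)
          _ ≤ _ := by
              rw [c22]
              exact mul_le_mul_left (ENNReal.rpow_le_rpow c21 (by norm_num)) _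
      have hrw : ∀ (x y : ℝ≥0∞), (x ^ ((1:ℝ)/2) * y ^ ((1:ℝ)/2)) ^ ((1:ℝ)/2)
          = x ^ ((1:ℝ)/4) * y ^ ((1:ℝ)/4) := by
        intro x y
        rw [ENNReal.mul_rpow_of_nonneg _ _ (by norm_num : (0:ℝ) ≤ 1/2),
          ← ENNReal.rpow_mul, ← ENNReal.rpow_mul]
        norm_num
      calc ∫⁻ ω, ENNReal.ofReal (G ω) ∂Q
          = ∫⁻ ω, ENNReal.ofReal
              ((Real.sqrt (s ω) * Real.sqrt (φ₀ ω)) * (Real.sqrt (u ω) * Real.sqrt (φ₀ ω))) ∂Q :=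
            lintegral_congr fun ω => by rw [e ω]
        _ ≤ (∫⁻ ω, ENNReal.ofReal ((Real.sqrt (s ω) * Real.sqrt (φ₀ ω)) ^ 2) ∂Q) ^ ((1:ℝ)/2) *
            (∫⁻ ω, ENNReal.ofReal ((Real.sqrt (u ω) * Real.sqrt (φ₀ ω)) ^ 2) ∂Q) ^ ((1:ℝ)/2) :=
            lin_CS Q hsφ huφ
              (fun ω => mul_nonneg (Real.sqrt_nonneg _) (Real.sqrt_nonneg _))
              (fun ω => mul_nonneg (Real.sqrt_nonneg _) (Real.sqrt_nonneg _))
        _ ≤ (1:ℝ≥0∞) ^ ((1:ℝ)/2) *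
            ((ENNReal.ofReal C) ^ ((1:ℝ)/2) *
              (∫⁻ ω, ENNReal.ofReal (φ₀ ω) ∂Q) ^ ((1:ℝ)/2)) ^ ((1:ℝ)/2) :=
            mul_le_mul' (ENNReal.rpow_le_rpow c1 (by norm_num))
              (ENNReal.rpow_le_rpow c2 (by norm_num))
        _ = _ := by rw [ENNReal.one_rpow, one_mul, hrw]
    exact s1.trans (s2.le.trans s3)
  -- integrability of W * φ
  have hWφ_int : Integrable (fun ω => W ω * φ ω) Q := by
    refine hWint.abs.mono' ((hWmeas.mul hφmeas).aestronglyMeasurable)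
      (ae_of_all _ fun ω => ?_)
    rw [Real.norm_eq_abs, abs_mul]
    calc |W ω| * |φ ω| ≤ |W ω| * 1 := by
          refine mul_le_mul_of_nonneg_left ?_ (abs_nonneg _)
          rw [abs_of_nonneg (hφ0 ω)]; exact hφ1 ω
      _ = |W ω| := mul_one _
  have hWφ0 : 0 ≤ᵐ[Q] fun ω => W ω * φ ω := hW0.mono fun ω h => mul_nonneg h (hφ0 ω)
  -- the key truncated estimate
  have keyn : ∀ n : ℕ, ∫⁻ ω, Set.indicator {ω | W ω ≤ (n:ℝ)}
        (fun ω => ENNReal.ofReal (V ω * φ₀ ω)) ω ∂Q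
      ≤ ∫⁻ ω, ENNReal.ofReal (W ω * φ ω) ∂Q := by
    intro n
    have hEmeas : MeasurableSet[mΩ] {ω | W ω ≤ (n:ℝ)} := measurableSet_le hWmeas measurable_const
    set fn : Ω → ℝ := fun ω =>
      V ω * φ₀ ω * Set.indicator {ω | W ω ≤ (n:ℝ)} (fun _ => (1:ℝ)) ω with hfndef
    have hfn_meas : Measurable[mΩ] fn :=
      (hVmeas.mul hφ₀m).mul (measurable_const.indicator hEmeas)
    have hind01 : ∀ ω, 0 ≤ Set.indicator {ω | W ω ≤ (n:ℝ)} (fun _ => (1:ℝ)) ω ∧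
        Set.indicator {ω | W ω ≤ (n:ℝ)} (fun _ => (1:ℝ)) ω ≤ 1 := by
      intro ω
      by_cases hω : ω ∈ {ω | W ω ≤ (n:ℝ)} <;>
        simp [Set.indicator_of_mem, Set.indicator_of_notMem, hω]
    have hfn_int : Integrable fn Q := by
      refine hVint.abs.mono' hfn_meas.aestronglyMeasurable
        (ae_of_all _ fun ω => ?_)
      rw [Real.norm_eq_abs, hfndef]
      simp only []
      rw [abs_mul, abs_mul]
      calc |V ω| * |φ₀ ω| * |Set.indicator {ω | W ω ≤ (n:ℝ)} (fun _ => (1:ℝ)) ω|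
          ≤ |V ω| * 1 * 1 := by
            refine mul_le_mul (mul_le_mul_of_nonneg_left ?_ (abs_nonneg _)) ?_
              (abs_nonneg _) (by positivity)
            · rw [abs_of_nonneg (hφ₀0 ω)]; exact hφ₀1 ω
            · rw [abs_of_nonneg (hind01 ω).1]; exact (hind01 ω).2
        _ = |V ω| := by ring
    have hfn0 : 0 ≤ᵐ[Q] fn := by
      filter_upwards [hV0] with ω h
      exact mul_nonneg (mul_nonneg h (hφ₀0 ω)) (hind01 ω).1
    have hminGint : Integrable (fun ω => min (W ω) (n:ℝ) * G ω) Q := by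
      refine (hG_int.const_mul (n:ℝ)).mono'
        ((hWmeas.min measurable_const).mul hGmeas).aestronglyMeasurable ?_
      filter_upwards [hW0] with ω h
      rw [Real.norm_eq_abs, abs_mul, abs_of_nonneg (hG0 ω)]
      have h1 : |min (W ω) (n:ℝ)| ≤ (n:ℝ) := by
        rw [abs_of_nonneg (le_min h (Nat.cast_nonneg n))]
        exact min_le_right _ _
      exact mul_le_mul_of_nonneg_right h1 (hG0 ω)
    have hstepA : fn ≤ᵐ[Q] fun ω => min (W ω) (n:ℝ) * G ω := by
      filter_upwards [hVW, hW0] with ω h1 h2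
      by_cases hω : ω ∈ {ω | W ω ≤ (n:ℝ)}
      · have hWn : W ω ≤ (n:ℝ) := hω
        show V ω * φ₀ ω * Set.indicator _ _ ω ≤ _
        rw [Set.indicator_of_mem hω, mul_one]
        calc V ω * φ₀ ω ≤ (Real.sqrt (s ω * u ω) * W ω) * φ₀ ω :=
            mul_le_mul_of_nonneg_right h1 (hφ₀0 ω)
          _ = min (W ω) (n:ℝ) * G ω := by rw [min_eq_left hWn, hGdef]; ring
      · show V ω * φ₀ ω * Set.indicator _ _ ω ≤ _
        rw [Set.indicator_of_notMem hω, mul_zero]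
        exact mul_nonneg (le_min h2 (Nat.cast_nonneg n)) (hG0 ω)
    have hpull : Q[(fun ω => min (W ω) (n:ℝ)) * G|m]
        =ᵐ[Q] (fun ω => min (W ω) (n:ℝ)) * Q[G|m] := by
      have hcont : Continuous fun x : ℝ => min x (n:ℝ) := continuous_id.min continuous_const
      have hminsm : StronglyMeasurable[m] fun ω => min (W ω) (n:ℝ) :=
        hcont.comp_stronglyMeasurable hWsm
      refine condExp_mul_of_stronglyMeasurable_left hminsm ?_ hG_int
      exact hminGint
    have h1 : Q[fn|m] ≤ᵐ[Q] Q[(fun ω => min (W ω) (n:ℝ)) * G|m] :=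
      condExp_mono hfn_int hminGint hstepA
    have hfnV : fn ≤ᵐ[Q] V := by
      filter_upwards [hV0] with ω h
      calc fn ω = V ω * (φ₀ ω * Set.indicator {ω | W ω ≤ (n:ℝ)} (fun _ => (1:ℝ)) ω) := by
            rw [hfndef]; ring
        _ ≤ V ω * 1 := by
            refine mul_le_mul_of_nonneg_left ?_ h
            exact mul_le_one₀ (hφ₀1 ω) (hind01 ω).1 (hind01 ω).2
        _ = V ω := mul_one _
    have h2 : Q[fn|m] ≤ᵐ[Q] Q[V|m] := condExp_mono hfn_int integrable_condExp hfnV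
    have h3 : Q[V|m] =ᵐ[Q] W := by
      rw [hVdef, hWdef]
      exact condExp_condExp_of_le hmm' hm'
    have hcomb : Q[fn|m] ≤ᵐ[Q] fun ω => W ω * φ ω := by
      filter_upwards [h1, hpull, h2, h3, hW0, hξ0] with ω e1 e2 e3 e4 w0 x0
      simp only [Pi.mul_apply] at e2
      simp only [Pi.zero_apply] at w0 x0
      rcases le_or_gt (ξ ω) 1 with hcase | hcase
      · have hφeq : φ ω = ξ ω := by
          rw [hφdef]; simp only []
          rw [max_eq_left x0, min_eq_right hcase]
        calc (Q[fn|m]) ω ≤ (Q[(fun ω => min (W ω) (n:ℝ)) * G|m]) ω := e1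
          _ = min (W ω) (n:ℝ) * ξ ω := e2
          _ ≤ W ω * ξ ω := mul_le_mul_of_nonneg_right (min_le_left _ _) x0
          _ = W ω * φ ω := by rw [hφeq]
      · have hφeq : φ ω = 1 := by
          rw [hφdef]; simp only []
          exact min_eq_left (le_max_of_le_left hcase.le)
        calc (Q[fn|m]) ω ≤ (Q[V|m]) ω := e3
          _ = W ω := e4
          _ = W ω * φ ω := by rw [hφeq, mul_one]
    have hreal : ∫ ω, fn ω ∂Q ≤ ∫ ω, W ω * φ ω ∂Q := by
      calc ∫ ω, fn ω ∂Q = ∫ ω, (Q[fn|m]) ω ∂Q := (integral_condExp hm).symm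
        _ ≤ ∫ ω, W ω * φ ω ∂Q := integral_mono_ae integrable_condExp hWφ_int hcomb
    calc ∫⁻ ω, Set.indicator {ω | W ω ≤ (n:ℝ)} (fun ω => ENNReal.ofReal (V ω * φ₀ ω)) ω ∂Q
        = ∫⁻ ω, ENNReal.ofReal (fn ω) ∂Q := by
          refine lintegral_congr fun ω => ?_
          by_cases hω : ω ∈ {ω | W ω ≤ (n:ℝ)}
          · rw [Set.indicator_of_mem hω, hfndef]
            simp only []
            rw [Set.indicator_of_mem hω, mul_one]
          · rw [Set.indicator_of_notMem hω, hfndef]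
            simp only []
            rw [Set.indicator_of_notMem hω, mul_zero, ENNReal.ofReal_zero]
      _ = ENNReal.ofReal (∫ ω, fn ω ∂Q) :=
          (ofReal_integral_eq_lintegral_ofReal hfn_int hfn0).symm
      _ ≤ ENNReal.ofReal (∫ ω, W ω * φ ω ∂Q) := ENNReal.ofReal_le_ofReal hreal
      _ = ∫⁻ ω, ENNReal.ofReal (W ω * φ ω) ∂Q :=
          ofReal_integral_eq_lintegral_ofReal hWφ_int hWφ0
  -- pass to the limit
  have hsup : ∫⁻ ω, ENNReal.ofReal (V ω * φ₀ ω) ∂Q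
      ≤ ∫⁻ ω, ENNReal.ofReal (W ω * φ ω) ∂Q := by
    have hmono : Monotone fun (n:ℕ) => fun ω =>
        Set.indicator {ω | W ω ≤ (n:ℝ)} (fun ω => ENNReal.ofReal (V ω * φ₀ ω)) ω := by
      intro a b hab ω
      refine Set.indicator_le_indicator_of_subset ?_ (fun _ => zero_le) ω
      intro ω' hω'
      have h' : W ω' ≤ (a:ℝ) := hω'
      show W ω' ≤ (b:ℝ)
      exact le_trans h' (Nat.cast_le.mpr hab)
    have hsupeq : ∀ ω, (⨆ n : ℕ, Set.indicator {ω | W ω ≤ (n:ℝ)}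
        (fun ω => ENNReal.ofReal (V ω * φ₀ ω)) ω) = ENNReal.ofReal (V ω * φ₀ ω) := by
      intro ω
      obtain ⟨n, hn⟩ := exists_nat_ge (W ω)
      apply le_antisymm
      · refine iSup_le fun k => ?_
        by_cases hω : ω ∈ {ω | W ω ≤ (k:ℝ)}
        · rw [Set.indicator_of_mem hω]
        · rw [Set.indicator_of_notMem hω]; exact zero_le
      · refine le_trans ?_ (le_iSup _ n)
        rw [Set.indicator_of_mem (show ω ∈ {ω | W ω ≤ (n:ℝ)} from hn)]
    calc ∫⁻ ω, ENNReal.ofReal (V ω * φ₀ ω) ∂Q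
        = ∫⁻ ω, ⨆ n : ℕ, Set.indicator {ω | W ω ≤ (n:ℝ)}
            (fun ω => ENNReal.ofReal (V ω * φ₀ ω)) ω ∂Q :=
          lintegral_congr fun ω => (hsupeq ω).symm
      _ = ⨆ n : ℕ, ∫⁻ ω, Set.indicator {ω | W ω ≤ (n:ℝ)}
            (fun ω => ENNReal.ofReal (V ω * φ₀ ω)) ω ∂Q := by
          refine lintegral_iSup (fun n => ?_) hmono
          exact ((hVmeas.mul hφ₀m).ennreal_ofReal).indicator
            (measurableSet_le hWmeas measurable_const)
      _ ≤ ∫⁻ ω, ENNReal.ofReal (W ω * φ ω) ∂Q := iSup_le keyn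
  calc ∫⁻ ω, ENNReal.ofReal (V ω * φ₀ ω) ∂Q
      ≤ ∫⁻ ω, ENNReal.ofReal (W ω * φ ω) ∂Q := hsup
    _ ≤ N * (∫⁻ ω, ENNReal.ofReal (φ ω) ∂Q) ^ α := IH φ hφmeas hφ0 hφ1
    _ ≤ N * ((ENNReal.ofReal C) ^ ((1:ℝ)/4) *
          (∫⁻ ω, ENNReal.ofReal (φ₀ ω) ∂Q) ^ ((1:ℝ)/4)) ^ α :=
        mul_le_mul_right (ENNReal.rpow_le_rpow hφT hα0) N

/-- Iterated change-of-measure deviation transfer: with `P = D · Q`, `D > 0` a.e.,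
`P = Q` on `F 0`, and factorizations `D_j² ≤ S_j U_j D_{j-1}²` with `E_Q[S_j] ≤ 1`
and `E_Q[U_j²] ≤ C` along the filtration `F 0 ⊆ … ⊆ F K`, every `F K`-measurable
event `A` satisfies `P(A) ≤ C^(K(K+1)/8) Q(A)^(1/4^K)`. -/
theorem change_of_measure_iterated {Ω : Type*} {mΩ : MeasurableSpace Ω}
    (K : ℕ) (hK : 1 ≤ K)
    (F : ℕ → MeasurableSpace Ω)
    (hFmono : ∀ j, j < K → F j ≤ F (j + 1))
    (hFle : ∀ j, j ≤ K → F j ≤ mΩ)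
    (Q P : Measure Ω) [IsProbabilityMeasure Q] [IsProbabilityMeasure P]
    (D : Ω → ℝ) (hD : Measurable D) (hDpos : ∀ᵐ ω ∂Q, 0 < D ω)
    (hP : P = Q.withDensity fun ω => ENNReal.ofReal (D ω))
    (hD0 : Q[D|F 0] =ᵐ[Q] fun _ => 1)
    (C : ℝ) (hC : 1 ≤ C)
    (S U : ℕ → Ω → ℝ)
    (hSmeas : ∀ j, Measurable (S j)) (hUmeas : ∀ j, Measurable (U j))
    (hSnonneg : ∀ j ω, 0 ≤ S j ω) (hUnonneg : ∀ j ω, 0 ≤ U j ω)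
    (hfact : ∀ j, 1 ≤ j → j ≤ K →
      ∀ᵐ ω ∂Q, (Q[D|F j]) ω ^ 2 ≤ S j ω * U j ω * (Q[D|F (j - 1)]) ω ^ 2)
    (hSint : ∀ j, 1 ≤ j → j ≤ K → ∫⁻ ω, ENNReal.ofReal (S j ω) ∂Q ≤ 1)
    (hUint : ∀ j, 1 ≤ j → j ≤ K →
      ∫⁻ ω, ENNReal.ofReal (U j ω ^ 2) ∂Q ≤ ENNReal.ofReal C)
    (A : Set Ω) (hA : MeasurableSet[F K] A) :
    P A ≤ ENNReal.ofReal (C ^ ((K : ℝ) * ((K : ℝ) + 1) / 8)) *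
      Q A ^ ((1 : ℝ) / 4 ^ K) := by
  have hmK : F K ≤ mΩ := hFle K le_rfl
  haveI : SigmaFinite (Q.trim hmK) := inferInstance
  have hDae : 0 ≤ᵐ[Q] D := hDpos.mono fun ω h => h.le
  have hPuniv : ∫⁻ ω, ENNReal.ofReal (D ω) ∂Q = 1 := by
    have h1 : P Set.univ = 1 := measure_univ
    rw [hP, withDensity_apply _ MeasurableSet.univ, Measure.restrict_univ] at h1
    exact h1
  have hDint : Integrable D Q := by
    refine ⟨hD.aestronglyMeasurable, ?_⟩
    rw [hasFiniteIntegral_iff_ofReal hDae, hPuniv]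
    exact ENNReal.one_lt_top
  -- main induction
  have main : ∀ j, j ≤ K → ∀ φ : Ω → ℝ, Measurable[mΩ] φ → (∀ ω, 0 ≤ φ ω) →
      (∀ ω, φ ω ≤ 1) →
      ∫⁻ ω, ENNReal.ofReal ((Q[D|F j]) ω * φ ω) ∂Q ≤
        (ENNReal.ofReal C) ^ (∑ i ∈ Finset.range j, ((1:ℝ)/4) ^ (i + 1)) *
        (∫⁻ ω, ENNReal.ofReal (φ ω) ∂Q) ^ (((1:ℝ)/4) ^ j) := by
    intro j
    induction j with
    | zero =>
      intro _ φ hφ h0 h1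
      have hcong : ∀ᵐ ω ∂Q, ENNReal.ofReal ((Q[D|F 0]) ω * φ ω) = ENNReal.ofReal (φ ω) :=
        hD0.mono fun ω h => by rw [show (Q[D|F 0]) ω = 1 from h, one_mul]
      rw [lintegral_congr_ae hcong]
      simp
    | succ j ih =>
      intro hj1 φ₀ hφ₀ h0 h1
      have hjK : j ≤ K := Nat.le_of_succ_le hj1
      have hjlt : j < K := Nat.lt_of_succ_le hj1
      have h1j : 1 ≤ j + 1 := Nat.le_add_left 1 j
      have hfacj := hfact (j + 1) h1j hj1
      simp only [Nat.add_sub_cancel] at hfacj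
      have hstep := step_lemma (hFmono j hjlt) (hFle (j + 1) hj1) hDint hDae
        (hSmeas (j + 1)) (hUmeas (j + 1)) (hSnonneg (j + 1)) (hUnonneg (j + 1)) hfacj
        (hSint (j + 1) h1j hj1) hC (hUint (j + 1) h1j hj1)
        (N := (ENNReal.ofReal C) ^ (∑ i ∈ Finset.range j, ((1:ℝ)/4) ^ (i + 1)))
        (α := ((1:ℝ)/4) ^ j) (pow_nonneg (by norm_num) j)
        (fun φ hφm hφ0' hφ1' => ih hjK φ hφm hφ0' hφ1') hφ₀ h0 h1
      refine hstep.trans (le_of_eq ?_)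
      have hC0 : (ENNReal.ofReal C) ≠ 0 := by
        simp only [ne_eq, ENNReal.ofReal_eq_zero, not_le]
        linarith
      have hCt : (ENNReal.ofReal C) ≠ ⊤ := ENNReal.ofReal_ne_top
      rw [ENNReal.mul_rpow_of_nonneg _ _ (pow_nonneg (by norm_num) j),
        ← ENNReal.rpow_mul, ← ENNReal.rpow_mul, ← mul_assoc,
        ← ENNReal.rpow_add _ _ hC0 hCt]
      have he1 : (∑ i ∈ Finset.range j, ((1:ℝ)/4) ^ (i + 1)) + (1:ℝ)/4 * ((1:ℝ)/4) ^ j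
          = ∑ i ∈ Finset.range (j + 1), ((1:ℝ)/4) ^ (i + 1) := by
        rw [Finset.sum_range_succ, pow_succ]
        ring
      have he2 : (1:ℝ)/4 * ((1:ℝ)/4) ^ j = ((1:ℝ)/4) ^ (j + 1) := by
        rw [pow_succ]; ring
      rw [he1, he2]
  -- apply to the indicator of A
  have hAmeas : MeasurableSet A := hmK A hA
  set φA : Ω → ℝ := fun ω => Set.indicator A (fun _ => (1:ℝ)) ω with hφAdef
  have hφAm : Measurable[mΩ] φA := measurable_const.indicator hAmeas
  have hφA0 : ∀ ω, 0 ≤ φA ω := by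
    intro ω
    by_cases hω : ω ∈ A <;>
      simp [hφAdef, Set.indicator_of_mem, Set.indicator_of_notMem, hω]
  have hφA1 : ∀ ω, φA ω ≤ 1 := by
    intro ω
    by_cases hω : ω ∈ A <;>
      simp [hφAdef, Set.indicator_of_mem, Set.indicator_of_notMem, hω]
  have hWK0 : 0 ≤ᵐ[Q] (Q[D|F K]) := condExp_nonneg hDae
  have hPA : P A = ∫⁻ ω, ENNReal.ofReal ((Q[D|F K]) ω * φA ω) ∂Q := by
    rw [hP, withDensity_apply _ hAmeas,
      ← ofReal_integral_eq_lintegral_ofReal hDint.restrict (ae_restrict_of_ae hDae),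
      ← setIntegral_condExp hmK hDint hA,
      ofReal_integral_eq_lintegral_ofReal integrable_condExp.restrict
        (ae_restrict_of_ae hWK0),
      ← lintegral_indicator hAmeas]
    refine lintegral_congr fun ω => ?_
    by_cases hω : ω ∈ A
    · rw [Set.indicator_of_mem hω, hφAdef]
      simp only []
      rw [Set.indicator_of_mem hω, mul_one]
    · rw [Set.indicator_of_notMem hω, hφAdef]
      simp only []
      rw [Set.indicator_of_notMem hω, mul_zero, ENNReal.ofReal_zero]
  have hTA : ∫⁻ ω, ENNReal.ofReal (φA ω) ∂Q = Q A := by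
    have h1 : ∀ ω, ENNReal.ofReal (φA ω) = Set.indicator A (fun _ => (1:ℝ≥0∞)) ω := by
      intro ω
      by_cases hω : ω ∈ A
      · rw [hφAdef]; simp only []
        rw [Set.indicator_of_mem hω, Set.indicator_of_mem hω, ENNReal.ofReal_one]
      · rw [hφAdef]; simp only []
        rw [Set.indicator_of_notMem hω, Set.indicator_of_notMem hω, ENNReal.ofReal_zero]
    rw [lintegral_congr h1, lintegral_indicator hAmeas]
    simp
  have hmain := main K le_rfl φA hφAm hφA0 hφA1
  rw [← hPA, hTA] at hmain
  -- exponents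
  have hgauss : ∀ n : ℕ, ∑ i ∈ Finset.range n, ((i:ℝ) + 1) = (n:ℝ) * ((n:ℝ) + 1) / 2 := by
    intro n
    induction n with
    | zero => simp
    | succ k ihk =>
      rw [Finset.sum_range_succ, ihk]
      push_cast
      ring
  have hsumK : (∑ i ∈ Finset.range K, ((1:ℝ)/4) ^ (i + 1)) ≤ (K:ℝ) * ((K:ℝ) + 1) / 8 := by
    calc ∑ i ∈ Finset.range K, ((1:ℝ)/4) ^ (i + 1)
        ≤ ∑ i ∈ Finset.range K, ((i:ℝ) + 1) / 4 := by
          refine Finset.sum_le_sum fun i _ => ?_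
          calc ((1:ℝ)/4) ^ (i + 1) ≤ ((1:ℝ)/4) ^ 1 :=
              pow_le_pow_of_le_one (by norm_num) (by norm_num)
                (Nat.succ_le_succ (Nat.zero_le i))
            _ = 1/4 := pow_one _
            _ ≤ ((i:ℝ) + 1) / 4 := by
              have hi : (0:ℝ) ≤ (i:ℝ) := Nat.cast_nonneg i
              linarith
      _ = (∑ i ∈ Finset.range K, ((i:ℝ) + 1)) / 4 := by rw [Finset.sum_div]
      _ = (K:ℝ) * ((K:ℝ) + 1) / 8 := by rw [hgauss]; ring
  have h1C : (1:ℝ≥0∞) ≤ ENNReal.ofReal C := ENNReal.one_le_ofReal.mpr hC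
  have hfin1 : (ENNReal.ofReal C) ^ (∑ i ∈ Finset.range K, ((1:ℝ)/4) ^ (i + 1))
      ≤ ENNReal.ofReal (C ^ ((K:ℝ) * ((K:ℝ) + 1) / 8)) := by
    rw [← ENNReal.ofReal_rpow_of_pos (lt_of_lt_of_le zero_lt_one hC)]
    exact ENNReal.rpow_le_rpow_of_exponent_le h1C hsumK
  have hexp : ((1:ℝ)/4) ^ K = (1:ℝ) / 4 ^ K := by
    rw [div_pow, one_pow]
  calc P A ≤ (ENNReal.ofReal C) ^ (∑ i ∈ Finset.range K, ((1:ℝ)/4) ^ (i + 1)) *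
        (Q A) ^ (((1:ℝ)/4) ^ K) := hmain
    _ ≤ ENNReal.ofReal (C ^ ((K:ℝ) * ((K:ℝ) + 1) / 8)) * (Q A) ^ ((1:ℝ) / 4 ^ K) := by
        rw [← hexp]
        exact mul_le_mul_left hfin1 _
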